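/- Let G(S) be the induced subgraph of a subset S of variable nodes in a Tanner graph, and suppose G(S) is connected and contains a check node w of degree k ≥ 3 such that the graph G(S) with w deleted splits into exactly k connected components, each containing exactly one neighbor of w. Then S cannot be obtained from any subset S' ⊊ S whose induced subgraph is connected and has all check-node degrees at most 2 (an ETS) by successively adding variable nodes, where each added variable node is connected to at least 2 check nodes of the current subgraph's check set. -/

import Mathlib

/-- Degree of a variable node `v` in the Tanner graph given by adjacency `adj`. -/
def varDeg {V C : Type*} [Fintype C] (adj : V → C → Prop) [∀ v c, Decidable (adj v c)] (v : V) : ℕ :=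
  (Finset.univ.filter (fun c => adj v c)).card

/-- Degree of a check node `c` in the subgraph induced by the set `S` of variable nodes. -/
def chkDeg {V C : Type*} [DecidableEq V] (adj : V → C → Prop) [∀ v c, Decidable (adj v c)]
    (S : Finset V) (c : C) : ℕ :=
  (S.filter (fun v => adj v c)).card

/-- The set of check nodes of odd degree in the subgraph induced by `S`. -/
def oddChks {V C : Type*} [DecidableEq V] [Fintype C] (adj : V → C → Prop) [∀ v c, Decidable (adj v c)]
    (S : Finset V) : Finset C :=
  Finset.univ.filter (fun c => Odd (chkDeg adj S c))

/-- The Tanner graph of the adjacency relation `adj`, as a simple graph on `V ⊕ C`. -/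
def tanner {V C : Type*} (adj : V → C → Prop) : SimpleGraph (V ⊕ C) where
  Adj x y := (∃ v c, x = Sum.inl v ∧ y = Sum.inr c ∧ adj v c) ∨
    (∃ v c, x = Sum.inr c ∧ y = Sum.inl v ∧ adj v c)
  symm := by
    refine ⟨?_⟩
    rintro x y (⟨v, c, h1, h2, h3⟩ | ⟨v, c, h1, h2, h3⟩)
    · exact Or.inr ⟨v, c, h2, h1, h3⟩
    · exact Or.inl ⟨v, c, h2, h1, h3⟩
  loopless := by
    refine ⟨?_⟩
    rintro x (⟨v, c, h1, h2, _⟩ | ⟨v, c, h1, h2, _⟩) <;> subst h1 <;> simp at h2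

/-- The node set `S ∪ Γ(S)` of the induced subgraph `G(S)`, inside `V ⊕ C`. -/
def tsNodes {V C : Type*} (adj : V → C → Prop) (S : Finset V) : Set (V ⊕ C) :=
  {x | ∃ v ∈ S, x = Sum.inl v ∨ ∃ c, x = Sum.inr c ∧ adj v c}

/-- `DotReach adj T S` : `S` can be obtained from `T` by successively inserting variable nodes,
each of which is adjacent to at least two check nodes of the current induced subgraph. -/
inductive DotReach {V C : Type*} [DecidableEq V] [Fintype C] (adj : V → C → Prop)
    [∀ v c, Decidable (adj v c)] : Finset V → Finset V → Prop
  | refl (T : Finset V) : DotReach adj T T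
  | step {T T' : Finset V} (v : V) (hv : v ∉ T')
      (h2 : 2 ≤ (Finset.univ.filter (fun c => adj v c ∧ 0 < chkDeg adj T' c)).card) :
      DotReach adj T T' → DotReach adj T (insert v T')

/-- If `G(S)` is connected and contains a check node `w` of degree `k ≥ 3` such
that deleting `w` disconnects the distinct neighbors of `w` from each other (each of the `k`
components containing exactly one neighbor of `w`, and every node reachable from some
neighbor of `w`), then `S` cannot be obtained from a proper subset `S'` whose induced
subgraph is connected with all check degrees ≤ 2 (an ETS) by successively adding variable
nodes each connected to at least 2 check nodes of the current subgraph. -/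
theorem nets_disconnected_not_dot_reachable {V C : Type*} [Fintype C] [DecidableEq V]
    (adj : V → C → Prop) [∀ v c, Decidable (adj v c)]
    (S : Finset V) (w : C) (k : ℕ) (hk : 3 ≤ k) (hdeg : chkDeg adj S w = k)
    (hconn : ((tanner adj).induce (tsNodes adj S)).Connected)
    (hsep : ∀ v₁ v₂ : V, v₁ ∈ S → v₂ ∈ S → adj v₁ w → adj v₂ w → v₁ ≠ v₂ →
      ∀ (h₁ : Sum.inl v₁ ∈ tsNodes adj S \ {Sum.inr w})
        (h₂ : Sum.inl v₂ ∈ tsNodes adj S \ {Sum.inr w}),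
        ¬ ((tanner adj).induce (tsNodes adj S \ {Sum.inr w})).Reachable ⟨_, h₁⟩ ⟨_, h₂⟩)
    (hcover : ∀ x : (tsNodes adj S \ {Sum.inr w} : Set (V ⊕ C)),
      ∃ v ∈ S, adj v w ∧ ∃ h : Sum.inl v ∈ tsNodes adj S \ {Sum.inr w},
        ((tanner adj).induce (tsNodes adj S \ {Sum.inr w})).Reachable x ⟨_, h⟩) :
    ¬ ∃ S' : Finset V, S' ⊂ S ∧
      ((tanner adj).induce (tsNodes adj S')).Connected ∧
      (∀ c : C, chkDeg adj S' c ≤ 2) ∧ DotReach adj S' S := by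
  rintro ⟨S', hS'sub, hS'conn, hS'deg, hreach⟩
  have hsub : S' ⊆ S := hS'sub.subset
  set G' := (tanner adj).induce (tsNodes adj S \ {Sum.inr w}) with hG'
  -- membership helpers
  have mem_inl : ∀ v, v ∈ S → Sum.inl v ∈ tsNodes adj S \ {Sum.inr w} := by
    intro v hv
    exact ⟨⟨v, hv, Or.inl rfl⟩, by simp⟩
  -- the representative function via hcover
  let rep : (x : V ⊕ C) → (x ∈ tsNodes adj S \ {Sum.inr w}) → V :=
    fun x hx => (hcover ⟨x, hx⟩).choose
  have hrep : ∀ x hx, (rep x hx) ∈ S ∧ adj (rep x hx) w ∧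
      ∃ h : Sum.inl (rep x hx) ∈ tsNodes adj S \ {Sum.inr w},
        G'.Reachable ⟨x, hx⟩ ⟨Sum.inl (rep x hx), h⟩ :=
    fun x hx => (hcover ⟨x, hx⟩).choose_spec
  have hrep_eq : ∀ x hx v, v ∈ S → adj v w →
      ∀ (h : Sum.inl v ∈ tsNodes adj S \ {Sum.inr w}),
        G'.Reachable ⟨x, hx⟩ ⟨Sum.inl v, h⟩ → rep x hx = v := by
    intro x hx v hvS hvw h hr
    obtain ⟨hrS, hrw, hh, hr'⟩ := hrep x hx
    by_contra hne
    exact hsep _ _ hrS hvS hrw hvw hne hh h (hr'.symm.trans hr)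
  have hrep_self : ∀ v (hvS : v ∈ S), adj v w → rep (Sum.inl v) (mem_inl v hvS) = v := by
    intro v hvS hvw
    exact hrep_eq _ _ v hvS hvw (mem_inl v hvS) (SimpleGraph.Reachable.refl _)
  have hrep_adj : ∀ x hx y hy, G'.Adj ⟨x, hx⟩ ⟨y, hy⟩ → rep x hx = rep y hy := by
    intro x hx y hy hadj
    obtain ⟨hS, hw', hh, hr⟩ := hrep y hy
    exact hrep_eq x hx _ hS hw' hh (hadj.reachable.trans hr)
  have htsub : tsNodes adj S' ⊆ tsNodes adj S := by
    rintro x ⟨v, hv, hor⟩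
    exact ⟨v, hsub hv, hor⟩
  set G₀ := (tanner adj).induce (tsNodes adj S') with hG₀
  -- walk lemma in G(S')
  have hwalk : ∀ (y : ↑(tsNodes adj S')) (hy' : (y : V ⊕ C) ∈ tsNodes adj S \ {Sum.inr w})
      (x : ↑(tsNodes adj S')) (W : G₀.Walk x y)
      (hx' : (x : V ⊕ C) ∈ tsNodes adj S \ {Sum.inr w}),
      rep x hx' = rep y hy' ∨ ∃ u ∈ S', adj u w ∧ rep x hx' = u := by
    intro y hy' x W
    induction W with
    | nil => intro hx'; exact Or.inl rfl
    | @cons a b c hab p ih =>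
      intro hx'
      by_cases hb : (b : V ⊕ C) = Sum.inr w
      · -- the walk hits w; a is a variable node adjacent to w
        have hadj : (tanner adj).Adj (a : V ⊕ C) (b : V ⊕ C) := hab
        rcases hadj with ⟨v, cc, ha1, hb1, hvc⟩ | ⟨v, cc, ha1, hb1, hvc⟩
        · have hcw : cc = w := by rw [hb1] at hb; injection hb
          have hvw : adj v w := hcw ▸ hvc
          -- v ∈ S'
          have hvS' : v ∈ S' := by
            have := a.2
            rw [ha1] at this
            obtain ⟨v', hv', hor⟩ := this
            rcases hor with h | ⟨c', hc', _⟩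
            · have : v = v' := by injection h
              rwa [this]
            · exact absurd hc' (by simp)
          refine Or.inr ⟨v, hvS', hvw, ?_⟩
          refine hrep_eq _ _ v (hsub hvS') hvw (mem_inl v (hsub hvS')) ?_
          have : (⟨(a : V ⊕ C), hx'⟩ : ↑(tsNodes adj S \ {Sum.inr w})) =
              ⟨Sum.inl v, mem_inl v (hsub hvS')⟩ := Subtype.ext ha1
          rw [this]
        · exact absurd (hb1 ▸ hb) (by simp)
      · have hb' : (b : V ⊕ C) ∈ tsNodes adj S \ {Sum.inr w} := ⟨htsub b.2, hb⟩
        have hadjG' : G'.Adj ⟨(a : V ⊕ C), hx'⟩ ⟨(b : V ⊕ C), hb'⟩ := hab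
        have h1 : rep (a : V ⊕ C) hx' = rep (b : V ⊕ C) hb' := hrep_adj _ _ _ _ hadjG'
        rcases ih hy' hb' with h2 | ⟨u, hu, huw, h2⟩
        · exact Or.inl (h1.trans h2)
        · exact Or.inr ⟨u, hu, huw, h1.trans h2⟩
  -- base case: a set P of size ≤ 2 containing all reps of S'
  obtain ⟨x₀⟩ := hS'conn.nonempty
  obtain ⟨v₀, hv₀, _⟩ := x₀.2
  have hP : ∃ P : Finset V, P.card ≤ 2 ∧
      ∀ v (hv : v ∈ S'), rep (Sum.inl v) (mem_inl v (hsub hv)) ∈ P := by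
    by_cases hne : (S'.filter (fun u => adj u w)).Nonempty
    · refine ⟨S'.filter (fun u => adj u w), ?_, ?_⟩
      · have := hS'deg w
        rwa [chkDeg] at this
      · obtain ⟨u₁, hu₁⟩ := hne
        rw [Finset.mem_filter] at hu₁
        obtain ⟨hu₁S, hu₁w⟩ := hu₁
        intro v hv
        have hr := hS'conn.preconnected ⟨Sum.inl v, ⟨v, hv, Or.inl rfl⟩⟩
          ⟨Sum.inl u₁, ⟨u₁, hu₁S, Or.inl rfl⟩⟩
        obtain ⟨W⟩ := hr
        rcases hwalk _ (mem_inl u₁ (hsub hu₁S)) _ W (mem_inl v (hsub hv)) with h | ⟨u, hu, huw, h⟩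
        · rw [h, hrep_self u₁ (hsub hu₁S) hu₁w]
          exact Finset.mem_filter.mpr ⟨hu₁S, hu₁w⟩
        · rw [h]; exact Finset.mem_filter.mpr ⟨hu, huw⟩
    · refine ⟨{rep (Sum.inl v₀) (mem_inl v₀ (hsub hv₀))}, by simp, ?_⟩
      intro v hv
      have hr := hS'conn.preconnected ⟨Sum.inl v, ⟨v, hv, Or.inl rfl⟩⟩
        ⟨Sum.inl v₀, ⟨v₀, hv₀, Or.inl rfl⟩⟩
      obtain ⟨W⟩ := hr
      rcases hwalk _ (mem_inl v₀ (hsub hv₀)) _ W (mem_inl v (hsub hv)) with h | ⟨u, hu, huw, h⟩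
      · rw [h]; exact Finset.mem_singleton_self _
      · exact absurd ⟨u, Finset.mem_filter.mpr ⟨hu, huw⟩⟩ hne
  obtain ⟨P, hPcard, hPbase⟩ := hP
  -- invariant along DotReach
  have hinv : ∀ T, DotReach adj S' T → ∀ (hTS : T ⊆ S),
      ∀ v (hv : v ∈ T), rep (Sum.inl v) (mem_inl v (hTS hv)) ∈ P := by
    intro T hdr
    induction hdr with
    | refl => exact fun hTS v hv => hPbase v hv
    | @step T' v hv h2 hdr ih =>
      intro hTS v' hv'
      have hT'S : T' ⊆ S := fun u hu => hTS (Finset.mem_insert_of_mem hu)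
      rcases Finset.mem_insert.mp hv' with rfl | hv'T
      · -- the new vertex: find a check c ≠ w
        obtain ⟨c, hc, hcw⟩ := Finset.exists_mem_ne (lt_of_lt_of_le one_lt_two h2) w
        rw [Finset.mem_filter] at hc
        obtain ⟨-, hvc, hcd⟩ := hc
        obtain ⟨u, hu⟩ := Finset.card_pos.mp hcd
        rw [Finset.mem_filter] at hu
        obtain ⟨huT', huc⟩ := hu
        have hvS : v' ∈ S := hTS (Finset.mem_insert_self _ _)
        have hcmem : Sum.inr c ∈ tsNodes adj S \ {Sum.inr w} :=
          ⟨⟨v', hvS, Or.inr ⟨c, rfl, hvc⟩⟩, by simp [hcw]⟩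
        have h1 : rep (Sum.inl v') (mem_inl v' hvS) = rep (Sum.inr c) hcmem :=
          hrep_adj _ _ _ _ (Or.inl ⟨v', c, rfl, rfl, hvc⟩)
        have h2' : rep (Sum.inr c) hcmem = rep (Sum.inl u) (mem_inl u (hT'S huT')) :=
          (hrep_adj _ _ _ _ (Or.inl ⟨u, c, rfl, rfl, huc⟩)).symm
        rw [h1, h2']
        exact ih hT'S u huT'
      · exact ih hT'S v' hv'T
  have hfin := hinv S hreach (Finset.Subset.refl S)
  -- the k ≥ 3 neighbors of w are distinct reps, all in P
  have hFsub : S.filter (fun u => adj u w) ⊆ P := by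
    intro u hu
    rw [Finset.mem_filter] at hu
    obtain ⟨huS, huw⟩ := hu
    have := hfin u huS
    rwa [hrep_self u huS huw] at this
  have hcard := Finset.card_le_card hFsub
  rw [show (S.filter (fun u => adj u w)).card = chkDeg adj S w from rfl, hdeg] at hcard
  omega
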